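/- Define P(x,y) = Y(T(x,y), x, y) as in the transversal crossing setup. Then ∂P/∂x (0,0) = -2 g(0,0) / f(0,0). -/

import Mathlib

open Set

section helpers

variable {E : Type*} [NormedAddCommGroup E] [NormedSpace ℝ E]

lemma seg_right {φ d : ℝ → E} {C b : ℝ}
    (hd : ∀ s, HasDerivAt φ (d s) s)
    (hb : ∀ s ∈ Icc (0:ℝ) b, ‖d s‖ ≤ C) :
    ∀ s ∈ Icc (0:ℝ) b, ‖φ s - φ 0‖ ≤ C * s := by
  have h := norm_image_sub_le_of_norm_deriv_le_segment' (a := 0) (b := b) (f := φ) (f' := d)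
    (fun x _ => (hd x).hasDerivWithinAt) (fun x hx => hb x (Ico_subset_Icc_self hx))
  intro s hs
  simpa using h s hs

lemma seg_abs {φ d : ℝ → E} {C t : ℝ}
    (hd : ∀ s, HasDerivAt φ (d s) s)
    (hb : ∀ s : ℝ, |s| ≤ |t| → ‖d s‖ ≤ C) :
    ‖φ t - φ 0‖ ≤ C * |t| := by
  rcases le_total 0 t with ht | ht
  · have := seg_right hd (b := t)
      (fun s hs => hb s (by rw [abs_of_nonneg hs.1, abs_of_nonneg ht]; exact hs.2)) t
      ⟨ht, le_refl _⟩
    rwa [abs_of_nonneg ht]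
  · have hdψ : ∀ s, HasDerivAt (fun s => φ (-s)) ((-1 : ℝ) • d (-s)) s := by
      intro s
      exact (hd (-s)).scomp s (by simpa using (hasDerivAt_neg s))
    have hbb : ∀ s ∈ Icc (0:ℝ) (-t), ‖(-1 : ℝ) • d (-s)‖ ≤ C := by
      intro s hs
      rw [norm_smul]
      have h1 : |(-s)| ≤ |t| := by
        rw [abs_neg, abs_of_nonneg hs.1, abs_of_nonpos ht]; exact hs.2
      simpa using hb (-s) h1
    have := seg_right hdψ hbb (-t) ⟨by linarith, le_refl _⟩
    rw [abs_of_nonpos ht]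
    simpa using this

lemma escape_right {φ d : ℝ → E} {M r : ℝ}
    (hd : ∀ s, HasDerivAt φ (d s) s) (hM : 0 < M) (hr : 0 < r)
    (hbound : ∀ s, ‖φ s - φ 0‖ ≤ 2 * r → ‖d s‖ ≤ M) :
    ∀ s ∈ Icc (0:ℝ) (r / M), ‖φ s - φ 0‖ ≤ M * s := by
  set b := r / M with hbdef
  have hb : 0 ≤ b := le_of_lt (div_pos hr hM)
  have hMb : M * b = r := by rw [hbdef]; field_simp
  have hφc : Continuous φ := Differentiable.continuous (fun s => (hd s).differentiableAt)
  set C := {s : ℝ | s ∈ Icc (0:ℝ) b ∧ ∀ u ∈ Icc (0:ℝ) s, ‖φ u - φ 0‖ ≤ M * u} with hCdef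
  have h0C : (0:ℝ) ∈ C := ⟨⟨le_refl _, hb⟩, fun u hu => by
    have hu0 : u = 0 := le_antisymm hu.2 hu.1
    simp [hu0]⟩
  have hne : C.Nonempty := ⟨0, h0C⟩
  have hbdd : BddAbove C := ⟨b, fun s hs => hs.1.2⟩
  set c := sSup C with hcdef
  have hc0 : 0 ≤ c := le_csSup hbdd h0C
  have hcb : c ≤ b := csSup_le hne fun s hs => hs.1.2
  have hScl : IsClosed {u : ℝ | ‖φ u - φ 0‖ ≤ M * u} :=
    isClosed_le ((hφc.sub continuous_const).norm) (continuous_const.mul continuous_id)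
  have hlt : ∀ u, 0 ≤ u → u < c → ‖φ u - φ 0‖ ≤ M * u := by
    intro u hu0 huc
    obtain ⟨s, hsC, hus⟩ := exists_lt_of_lt_csSup hne huc
    exact hsC.2 u ⟨hu0, le_of_lt hus⟩
  have hcC : ∀ u ∈ Icc (0:ℝ) c, ‖φ u - φ 0‖ ≤ M * u := by
    intro u hu
    rcases lt_or_eq_of_le hu.2 with h | h
    · exact hlt u hu.1 h
    · rw [h]
      rcases eq_or_lt_of_le hc0 with h0 | h0
      · rw [← h0]; simp
      · have hsub : Ico (0:ℝ) c ⊆ {u : ℝ | ‖φ u - φ 0‖ ≤ M * u} :=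
          fun v hv => hlt v hv.1 hv.2
        have hcmem : c ∈ closure (Ico (0:ℝ) c) := by
          rw [closure_Ico (ne_of_lt h0)]
          exact ⟨hc0, le_refl _⟩
        exact (closure_minimal hsub hScl) hcmem
  rcases eq_or_lt_of_le hcb with hceq | hclt
  · intro s hs; exact hcC s ⟨hs.1, hceq ▸ hs.2⟩
  · exfalso
    have hMcr : M * c ≤ r := by
      have := mul_le_mul_of_nonneg_left hcb (le_of_lt hM)
      linarith [hMb ▸ this]
    have hφcbound : ‖φ c - φ 0‖ ≤ r := le_trans (hcC c ⟨hc0, le_refl _⟩) hMcr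
    obtain ⟨ε, hε, hεb⟩ : ∃ ε > 0, ∀ u : ℝ, |u - c| < ε → ‖φ u - φ c‖ ≤ r := by
      obtain ⟨δ, hδ, hδb⟩ := Metric.continuous_iff.mp hφc c r hr
      exact ⟨δ, hδ, fun u hu =>
        le_of_lt (by simpa [dist_eq_norm] using hδb u (by simpa [Real.dist_eq] using hu))⟩
    set b' := min (c + ε / 2) b with hb'def
    have hcb' : c < b' := lt_min (by linarith) hclt
    have hb'b : b' ≤ b := min_le_right _ _
    have hbound' : ∀ u ∈ Icc (0:ℝ) b', ‖d u‖ ≤ M := by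
      intro u hu
      apply hbound
      rcases le_total u c with h | h
      · have h1 := hcC u ⟨hu.1, h⟩
        have h2 : M * u ≤ M * c := mul_le_mul_of_nonneg_left h (le_of_lt hM)
        linarith
      · have hle : u ≤ c + ε / 2 := le_trans hu.2 (min_le_left _ _)
        have h1 : ‖φ u - φ c‖ ≤ r := hεb u (by rw [abs_of_nonneg (by linarith)]; linarith)
        have h2 : ‖φ u - φ 0‖ ≤ ‖φ u - φ c‖ + ‖φ c - φ 0‖ := by
          have := dist_triangle (φ u) (φ c) (φ 0)
          simpa [dist_eq_norm] using this
        linarith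
    have hb'C : b' ∈ C := ⟨⟨le_trans hc0 (le_of_lt hcb'), hb'b⟩, seg_right hd hbound'⟩
    exact absurd (le_csSup hbdd hb'C) (not_le.mpr hcb')

lemma escape_abs {φ d : ℝ → E} {M r : ℝ}
    (hd : ∀ s, HasDerivAt φ (d s) s) (hM : 0 < M) (hr : 0 < r)
    (hbound : ∀ s, ‖φ s - φ 0‖ ≤ 2 * r → ‖d s‖ ≤ M) :
    ∀ t : ℝ, |t| ≤ r / M → ‖φ t - φ 0‖ ≤ M * |t| := by
  intro t ht
  rcases le_total 0 t with h | h
  · rw [abs_of_nonneg h]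
    exact escape_right hd hM hr hbound t ⟨h, by rwa [abs_of_nonneg h] at ht⟩
  · have hdψ : ∀ s, HasDerivAt (fun s => φ (-s)) ((-1 : ℝ) • d (-s)) s := by
      intro s
      exact (hd (-s)).scomp s (by simpa using (hasDerivAt_neg s))
    have hbψ : ∀ s, ‖(fun s => φ (-s)) s - (fun s => φ (-s)) 0‖ ≤ 2 * r →
        ‖(-1 : ℝ) • d (-s)‖ ≤ M := by
      intro s hs
      have := hbound (-s) (by simpa using hs)
      simpa using this
    have := escape_right hdψ hM hr hbψ (-t)
      ⟨by linarith, by rwa [abs_of_nonpos h] at ht⟩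
    rw [abs_of_nonpos h]
    simpa using this

end helpers

set_option maxHeartbeats 1000000 in
theorem point_map_deriv_x
    (f g : ℝ × ℝ → ℝ) (hf : ContDiff ℝ 2 f) (hg : ContDiff ℝ 2 g)
    (hf0 : f (0, 0) ≠ 0)
    (X Y : ℝ → ℝ → ℝ → ℝ)
    (hX0 : ∀ x y, X 0 x y = x) (hY0 : ∀ x y, Y 0 x y = y)
    (hXflow : ∀ t x y, HasDerivAt (fun s => X s x y) (f (X t x y, Y t x y)) t)
    (hYflow : ∀ t x y, HasDerivAt (fun s => Y s x y) (g (X t x y, Y t x y)) t)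
    (T : ℝ × ℝ → ℝ) (hT0 : T (0, 0) = 0)
    (hT : ∃ U ∈ nhds ((0, 0) : ℝ × ℝ),
      ContDiffOn ℝ 1 T U ∧ ∀ p ∈ U, X (T p) p.1 p.2 = -p.1) :
    deriv (fun x => Y (T (x, 0)) x 0) 0 = -2 * g (0, 0) / f (0, 0) := by
  obtain ⟨U, hU, hTc1, hXT⟩ := hT
  set f₀ := f (0, 0) with hf₀def
  set g₀ := g (0, 0) with hg₀def
  set a := |f₀| with hadef
  have ha : 0 < a := abs_pos.mpr hf0
  set φ : ℝ → ℝ → ℝ × ℝ := fun x s => (X s x 0, Y s x 0) with hφdef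
  have hdφ : ∀ x s, HasDerivAt (φ x) (f (φ x s), g (φ x s)) s :=
    fun x s => (hXflow s x 0).prodMk (hYflow s x 0)
  have hφ0 : ∀ x, φ x 0 = (x, 0) := fun x => by simp [hφdef, hX0, hY0]
  have hnorm_x0 : ∀ x : ℝ, ‖((x : ℝ), (0:ℝ))‖ = |x| := by
    intro x
    rw [Prod.norm_def]
    simp [Real.norm_eq_abs, max_eq_left (abs_nonneg x)]
  -- bound on f, g near origin
  obtain ⟨M0, hM0⟩ := (isCompact_closedBall (0 : ℝ × ℝ) 1).exists_bound_of_continuousOn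
    ((hf.continuous.prodMk hg.continuous)).continuousOn
  set M := max M0 1 with hMdef
  have hM : 0 < M := lt_of_lt_of_le one_pos (le_max_right _ _)
  have hMbnd : ∀ p : ℝ × ℝ, ‖p‖ ≤ 1 → ‖(f p, g p)‖ ≤ M := by
    intro p hp
    refine le_trans (hM0 p ?_) (le_max_left _ _)
    simpa [Metric.mem_closedBall, dist_zero_right] using hp
  -- escape bound
  have hesc : ∀ x : ℝ, |x| ≤ 1/3 → ∀ t : ℝ, |t| ≤ (1/3) / M →
      ‖φ x t - φ x 0‖ ≤ M * |t| := by
    intro x hx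
    apply escape_abs (d := fun s => (f (φ x s), g (φ x s))) (hdφ x) hM (by norm_num)
    intro s hs
    apply hMbnd
    rw [hφ0] at hs
    have h1 : ‖φ x s‖ ≤ ‖φ x s - φ x 0‖ + ‖φ x 0‖ := by
      calc ‖φ x s‖ = ‖(φ x s - φ x 0) + φ x 0‖ := by rw [sub_add_cancel]
        _ ≤ ‖φ x s - φ x 0‖ + ‖φ x 0‖ := norm_add_le _ _
    rw [hφ0, hnorm_x0] at h1
    linarith
  -- continuity of T at the origin
  have hTcont : ContinuousAt T (0, 0) :=
    (hTc1.continuousOn.continuousWithinAt (mem_of_mem_nhds hU)).continuousAt hU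
  have hpair : Filter.Tendsto (fun x : ℝ => ((x : ℝ), (0:ℝ))) (nhds 0) (nhds ((0,0) : ℝ × ℝ)) :=
    (continuous_id.prodMk continuous_const).tendsto 0
  have hTx : Filter.Tendsto (fun x : ℝ => T (x, 0)) (nhds 0) (nhds 0) := by
    have h2 := hTcont.tendsto.comp hpair
    have hT0' : T (0 : ℝ × ℝ) = 0 := hT0
    simpa [Function.comp_def, hT0] using h2
  have hUev : ∀ᶠ x : ℝ in nhds 0, ((x : ℝ), (0:ℝ)) ∈ U := hpair hU
  have hP0 : Y (T ((0:ℝ), (0:ℝ))) 0 0 = 0 := by rw [hT0, hY0]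
  have hmain : HasDerivAt (fun x => Y (T (x, 0)) x 0) (-2 * g₀ / f₀) 0 := by
    rw [hasDerivAt_iff_tendsto_slope]
    rw [Metric.tendsto_nhds]
    intro ε' hε'
    set ε := min (a/2) (ε' * a^2 / (8 * (a + |g₀|))) with hεdef
    have hεpos : 0 < ε := lt_min (by positivity) (by positivity)
    have hεa : ε ≤ a / 2 := min_le_left _ _
    have hε8 : 8 * ε * (a + |g₀|) ≤ ε' * a^2 := by
      have h1 : ε ≤ ε' * a^2 / (8 * (a + |g₀|)) := min_le_right _ _
      have h2 : 0 < 8 * (a + |g₀|) := by positivity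
      rw [le_div_iff₀ h2] at h1
      nlinarith
    obtain ⟨δ₁, hδ₁, hfδ⟩ := Metric.continuousAt_iff.mp (hf.continuous.continuousAt (x := ((0,0) : ℝ × ℝ))) ε hεpos
    obtain ⟨δ₂, hδ₂, hgδ⟩ := Metric.continuousAt_iff.mp (hg.continuous.continuousAt (x := ((0,0) : ℝ × ℝ))) ε hεpos
    set δ := min δ₁ δ₂ with hδdef
    have hδ : 0 < δ := lt_min hδ₁ hδ₂
    have hxev : ∀ᶠ x : ℝ in nhds 0, |x| < min (1/3) (δ/3) := by
      have := Metric.ball_mem_nhds (0:ℝ) (by positivity : (0:ℝ) < min (1/3) (δ/3))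
      filter_upwards [this] with x hx
      simpa [Real.dist_eq] using hx
    have hTev : ∀ᶠ x : ℝ in nhds 0, |T (x, 0)| < min ((1/3)/M) (δ/(3*M)) := by
      have hball := Metric.ball_mem_nhds (0:ℝ)
        (by positivity : (0:ℝ) < min ((1/3)/M) (δ/(3*M)))
      filter_upwards [hTx hball] with x hx
      simpa [Real.dist_eq] using hx
    filter_upwards [nhdsWithin_le_nhds hxev, nhdsWithin_le_nhds hTev,
      nhdsWithin_le_nhds hUev, self_mem_nhdsWithin] with x hx1 hx2 hxU hx0
    set t := T (x, 0) with htdef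
    clear_value t ε δ M a
    have hx0' : x ≠ 0 := hx0
    have hxabs : 0 < |x| := abs_pos.mpr hx0'
    have hx13 : |x| ≤ 1/3 := le_of_lt (lt_of_lt_of_le hx1 (min_le_left _ _))
    have hxδ : |x| ≤ δ/3 := le_of_lt (lt_of_lt_of_le hx1 (min_le_right _ _))
    have ht13 : |t| ≤ (1/3)/M := le_of_lt (lt_of_lt_of_le hx2 (min_le_left _ _))
    have htδ : |t| ≤ δ/(3*M) := le_of_lt (lt_of_lt_of_le hx2 (min_le_right _ _))
    have hesc' : ∀ s : ℝ, |s| ≤ |t| → ‖φ x s - φ x 0‖ ≤ M * |s| :=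
      fun s hs => hesc x hx13 s (le_trans hs ht13)
    have hsmall : ∀ s : ℝ, |s| ≤ |t| → dist (φ x s) ((0,0) : ℝ × ℝ) < δ := by
      intro s hs
      have h1 := hesc' s hs
      rw [hφ0] at h1
      have h2 : ‖φ x s‖ ≤ ‖φ x s - φ x 0‖ + ‖φ x 0‖ := by
        calc ‖φ x s‖ = ‖(φ x s - φ x 0) + φ x 0‖ := by rw [sub_add_cancel]
          _ ≤ ‖φ x s - φ x 0‖ + ‖φ x 0‖ := norm_add_le _ _
      rw [hφ0, hnorm_x0] at h2
      have h3 : M * |s| ≤ M * |t| := mul_le_mul_of_nonneg_left hs (le_of_lt hM)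
      have h4 : M * |t| ≤ δ/3 := by
        calc M * |t| ≤ M * (δ/(3*M)) := mul_le_mul_of_nonneg_left htδ (le_of_lt hM)
          _ = δ/3 := by field_simp
      have h5 : dist (φ x s) ((0,0) : ℝ × ℝ) = ‖φ x s‖ := by
        rw [show ((0,0) : ℝ × ℝ) = 0 from rfl, dist_zero_right]
      rw [h5]
      linarith
    have hψd : ∀ s, HasDerivAt (fun s => φ x s - s • ((f₀, g₀) : ℝ × ℝ))
        ((f (φ x s), g (φ x s)) - (f₀, g₀)) s := by
      intro s
      exact (hdφ x s).sub (by simpa using (hasDerivAt_id s).smul_const ((f₀, g₀) : ℝ × ℝ))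
    have hkey : ‖(φ x t - t • ((f₀,g₀) : ℝ × ℝ)) - (φ x 0 - (0:ℝ) • ((f₀,g₀) : ℝ × ℝ))‖
        ≤ ε * |t| := by
      apply seg_abs hψd
      intro s hs
      have hd := hsmall s hs
      have h1 : dist (f (φ x s)) f₀ < ε := hfδ (lt_of_lt_of_le hd (by rw [hδdef]; exact min_le_left _ _))
      have h2 : dist (g (φ x s)) g₀ < ε := hgδ (lt_of_lt_of_le hd (by rw [hδdef]; exact min_le_right _ _))
      have h3 : (f (φ x s), g (φ x s)) - ((f₀, g₀) : ℝ × ℝ)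
          = (f (φ x s) - f₀, g (φ x s) - g₀) := rfl
      rw [h3, Prod.norm_def]
      apply max_le
      · simpa [Real.norm_eq_abs, ← Real.dist_eq] using le_of_lt h1
      · simpa [Real.norm_eq_abs, ← Real.dist_eq] using le_of_lt h2
    have hvec : (φ x t - t • ((f₀,g₀) : ℝ × ℝ)) - (φ x 0 - (0:ℝ) • ((f₀,g₀) : ℝ × ℝ))
        = ((X t x 0 - t * f₀ - x, Y t x 0 - t * g₀) : ℝ × ℝ) := by
      rw [hφ0]
      refine Prod.ext ?_ ?_ <;> simp [hφdef, smul_eq_mul] <;> ring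
    rw [hvec] at hkey
    have hXb : |X t x 0 - t * f₀ - x| ≤ ε * |t| :=
      le_trans (by simpa [Real.norm_eq_abs] using
        norm_fst_le ((X t x 0 - t * f₀ - x, Y t x 0 - t * g₀) : ℝ × ℝ)) hkey
    have hYb : |Y t x 0 - t * g₀| ≤ ε * |t| :=
      le_trans (by simpa [Real.norm_eq_abs] using
        norm_snd_le ((X t x 0 - t * f₀ - x, Y t x 0 - t * g₀) : ℝ × ℝ)) hkey
    have hcross : X t x 0 = -x := by
      have := hXT (x, 0) hxU
      simpa [← htdef] using this
    rw [hcross] at hXb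
    have hB : |t * f₀ + 2 * x| ≤ ε * |t| := by
      calc |t * f₀ + 2 * x| = |-x - t * f₀ - x| := by
            rw [← abs_neg (t * f₀ + 2 * x)]; congr 1; ring
        _ ≤ ε * |t| := hXb
    have hta : a * |t| ≤ 4 * |x| := by
      have h1 : |t * f₀| ≤ |t * f₀ + 2 * x| + |2 * x| := by
        calc |t * f₀| = |(t * f₀ + 2 * x) + (-(2 * x))| := by congr 1; ring
          _ ≤ |t * f₀ + 2 * x| + |(-(2 * x))| := abs_add_le _ _
          _ = |t * f₀ + 2 * x| + |2 * x| := by rw [abs_neg]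
      have h2 : |t * f₀| = |t| * a := by rw [abs_mul, hadef]
      have h3 : |2 * x| = 2 * |x| := by rw [abs_mul]; norm_num
      nlinarith [abs_nonneg t]
    have hsl : slope (fun x => Y (T (x, 0)) x 0) 0 x = Y t x 0 / x := by
      have h1 : slope (fun x => Y (T (x, 0)) x 0) 0 x
          = (Y (T (x, 0)) x 0 - Y (T ((0:ℝ), (0:ℝ))) 0 0) / (x - 0) := slope_def_field _ _ _
      rw [h1, hP0, sub_zero, sub_zero, htdef]
    rw [hsl, Real.dist_eq]
    have hid : Y t x 0 / x - (-2 * g₀ / f₀)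
        = ((Y t x 0 - t * g₀) * f₀ + g₀ * (t * f₀ + 2 * x)) / (f₀ * x) := by
      field_simp
      ring
    rw [hid, abs_div, abs_mul]
    rw [div_lt_iff₀ (by positivity : 0 < |f₀| * |x|)]
    have hnum : |(Y t x 0 - t * g₀) * f₀ + g₀ * (t * f₀ + 2 * x)|
        ≤ ε * |t| * a + |g₀| * (ε * |t|) := by
      refine le_trans (abs_add_le _ _) ?_
      apply add_le_add
      · rw [abs_mul, ← hadef]
        exact mul_le_mul_of_nonneg_right hYb (le_of_lt ha)
      · rw [abs_mul]
        exact mul_le_mul_of_nonneg_left hB (abs_nonneg g₀)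
    have hmul : (8 * ε * (a + |g₀|)) * (a * |t|) ≤ (ε' * a^2) * (4 * |x|) :=
      mul_le_mul hε8 hta (by positivity) (by positivity)
    nlinarith [hnum, hmul, mul_pos (mul_pos hε' (mul_pos ha ha)) hxabs, ha, hxabs,
      abs_nonneg t, abs_nonneg g₀, hεpos, hadef]
  exact hmain.deriv
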